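/- There exists an absolute constant C > 0 such that for every α > 0, all integers 0 < m < N, every choice of multipliers q̂_0, …, q̂_N satisfying q̂_k = 0 for k ≤ m and 1 − m/k ≤ q̂_k < 1 for k > m, and every φ ∈ R_N, the remainder operator R_m = I − Q_m satisfies ‖D_x R_m φ‖² ≤ C α² m² ‖φ‖². -/

import Mathlib

open MeasureTheory Real

/-- Physicists' Hermite polynomial: `ℋ_n(x) = (−1)^n e^{x²} (dⁿ/dxⁿ) e^{−x²}`. -/
noncomputable def physHermite (n : ℕ) : ℝ → ℝ :=
  fun x => (-1 : ℝ) ^ n * Real.exp (x ^ 2) * iteratedDeriv n (fun y => Real.exp (-(y ^ 2))) x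

/-- Generalized Hermite function `H_n^α(x) = (α/(2^n n! √π))^{1/2} ℋ_n(αx) e^{−α²x²/2}`. -/
noncomputable def genHermite (α : ℝ) (n : ℕ) : ℝ → ℝ :=
  fun x => Real.sqrt (α / (2 ^ n * n.factorial * Real.sqrt Real.pi)) *
    physHermite n (α * x) * Real.exp (-(α ^ 2 * x ^ 2) / 2)

/-- Integer-indexed generalized Hermite function, with the convention `H_n^α ≡ 0` for `n < 0`. -/
noncomputable def genHermiteZ (α : ℝ) (n : ℤ) : ℝ → ℝ :=
  fun x => if 0 ≤ n then genHermite α n.toNat x else 0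

/-- The operator `D_x = ∂_x + α² x`. -/
noncomputable def Dx (α : ℝ) (u : ℝ → ℝ) : ℝ → ℝ :=
  fun x => deriv u x + α ^ 2 * x * u x

/-- The Sturm–Liouville operator
`L_α(u)(x) = −e^{α²x²/2} ∂_x(e^{−α²x²} ∂_x(e^{α²x²/2} u(x)))`. -/
noncomputable def SLop (α : ℝ) (u : ℝ → ℝ) : ℝ → ℝ :=
  fun x => -(Real.exp (α ^ 2 * x ^ 2 / 2) *
    deriv (fun y => Real.exp (-(α ^ 2 * y ^ 2)) *
      deriv (fun z => Real.exp (α ^ 2 * z ^ 2 / 2) * u z) y) x)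


open Polynomial

noncomputable def PH : ℕ → Polynomial ℝ
  | 0 => 1
  | n + 1 => 2 * X * PH n - derivative (PH n)

theorem gauss_iteratedDeriv (n : ℕ) (x : ℝ) :
    iteratedDeriv n (fun y => Real.exp (-(y ^ 2))) x =
      (-1 : ℝ) ^ n * ((PH n).eval x * Real.exp (-(x ^ 2))) := by
  induction' n with n ih generalizing x
  · simp [PH]
  · replace ih : iteratedDeriv n _ = _ := funext ih
    have hd : HasDerivAt (fun x : ℝ => (-1 : ℝ) ^ n * ((PH n).eval x * Real.exp (-(x ^ 2))))
        ((-1 : ℝ) ^ (n + 1) * ((PH (n + 1)).eval x * Real.exp (-(x ^ 2)))) x := by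
      have h1 : HasDerivAt (fun x : ℝ => Real.exp (-(x ^ 2))) (-(2 * x) * Real.exp (-(x ^ 2))) x := by
        have := ((hasDerivAt_pow 2 x).neg).exp
        simpa using this.congr_deriv (by simp only [Pi.neg_apply]; ring)
      have h2 := ((PH n).hasDerivAt x).mul h1
      have h3 := h2.const_mul ((-1 : ℝ) ^ n)
      refine h3.congr_deriv ?_
      simp only [PH, eval_sub, eval_mul, eval_ofNat, eval_X]
      ring
    rw [iteratedDeriv_succ, ih]
    exact hd.deriv

theorem physHermite_eq (n : ℕ) (x : ℝ) : physHermite n x = (PH n).eval x := by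
  have h := gauss_iteratedDeriv n x
  simp only [physHermite, h]
  have h1 : Real.exp (x ^ 2) * Real.exp (-(x ^ 2)) = 1 := by
    rw [← Real.exp_add]; simp
  have h2 : ((-1 : ℝ) ^ n) * ((-1 : ℝ) ^ n) = 1 := by
    rw [← pow_add]; exact neg_one_pow_eq_one_iff_even (by norm_num) |>.2 ⟨n, by ring⟩
  calc (-1:ℝ)^n * Real.exp (x^2) * ((-1:ℝ)^n * ((PH n).eval x * Real.exp (-(x^2))))
      = (((-1:ℝ)^n) * ((-1:ℝ)^n)) * (PH n).eval x * (Real.exp (x^2) * Real.exp (-(x^2))) := by ring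
    _ = (PH n).eval x := by rw [h1, h2]; ring
theorem PH_derivative : ∀ n : ℕ, derivative (PH (n + 1)) = ((2 * (n + 1) : ℕ) : Polynomial ℝ) * PH n := by
  intro n
  induction n with
  | zero =>
    show derivative (2 * X * PH 0 - derivative (PH 0)) = _
    show derivative (2 * X * (1 : Polynomial ℝ) - derivative (1 : Polynomial ℝ)) = _
    simp [PH]
  | succ k ih =>
    have h2 : derivative (PH k) = 2 * X * PH k - PH (k + 1) := by
      have : PH (k + 1) = 2 * X * PH k - derivative (PH k) := rfl
      rw [this]; ring
    show derivative (2 * X * PH (k + 1) - derivative (PH (k + 1))) = _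
    rw [derivative_sub, ih]
    simp only [derivative_mul, derivative_natCast, derivative_X, derivative_ofNat, ih, h2]
    push_cast
    ring

theorem PH_iterate_derivative_self : ∀ n : ℕ, derivative^[n] (PH n) = (((2 ^ n * n.factorial : ℕ)) : Polynomial ℝ) := by
  intro n
  induction n with
  | zero => simp [PH]
  | succ k ih =>
    rw [Function.iterate_succ_apply, PH_derivative, ← Polynomial.C_eq_natCast,
      iterate_derivative_C_mul, ih, Polynomial.C_eq_natCast, ← Nat.cast_mul]
    congr 1
    rw [Nat.factorial_succ]
    ring

theorem PH_iterate_derivative_zero {m n : ℕ} (h : m < n) : derivative^[n] (PH m) = 0 := by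
  obtain ⟨k, rfl⟩ := Nat.exists_eq_add_of_le (Nat.succ_le_of_lt h)
  rw [add_comm, Function.iterate_add_apply, Function.iterate_succ_apply',
    PH_iterate_derivative_self, derivative_natCast]
  exact Function.iterate_fixed derivative_zero k
theorem integrable_pow_mul_gauss {b : ℝ} (hb : 0 < b) (n : ℕ) :
    Integrable fun x : ℝ => x ^ n * Real.exp (-b * x ^ 2) := by
  have := integrable_rpow_mul_exp_neg_mul_sq hb (s := (n : ℝ)) (lt_of_lt_of_le (by norm_num) (Nat.cast_nonneg n))
  simpa [Real.rpow_natCast] using this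

theorem integrable_poly_mul_gauss {b : ℝ} (hb : 0 < b) (p : Polynomial ℝ) :
    Integrable fun x : ℝ => p.eval x * Real.exp (-b * x ^ 2) := by
  have : (fun x : ℝ => p.eval x * Real.exp (-b * x ^ 2)) =
      fun x => ∑ i ∈ Finset.range (p.natDegree + 1), p.coeff i * (x ^ i * Real.exp (-b * x ^ 2)) := by
    funext x
    rw [Polynomial.eval_eq_sum_range, Finset.sum_mul]
    exact Finset.sum_congr rfl fun i _ => by ring
  rw [this]
  exact MeasureTheory.integrable_finset_sum _ fun i _ =>
    ((integrable_pow_mul_gauss hb i).const_mul _)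

theorem integrable_poly_mul_gauss' (p : Polynomial ℝ) :
    Integrable fun x : ℝ => p.eval x * Real.exp (-(x ^ 2)) := by
  simpa [neg_mul, one_mul] using integrable_poly_mul_gauss one_pos p

theorem tendsto_poly_mul_gauss_atTop (p : Polynomial ℝ) :
    Filter.Tendsto (fun x : ℝ => p.eval x * Real.exp (-(x ^ 2))) Filter.atTop (nhds 0) := by
  have h1 := p.tendsto_div_exp_atTop
  have h2 : Filter.Tendsto (fun x : ℝ => Real.exp (x - x ^ 2)) Filter.atTop (nhds 0) := by
    apply Real.tendsto_exp_atBot.comp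
    have : Filter.Tendsto (fun x : ℝ => x * (1 - x)) Filter.atTop Filter.atBot := by
      apply Filter.Tendsto.atTop_mul_atBot₀ Filter.tendsto_id
      exact Filter.tendsto_atBot_add_const_left _ _ Filter.tendsto_neg_atTop_atBot
    refine Filter.Tendsto.congr (fun x => by ring) this
  have := h1.mul h2
  rw [mul_zero] at this
  refine this.congr fun x => ?_
  rw [div_mul_eq_mul_div, div_eq_iff (Real.exp_ne_zero x), mul_assoc, ← Real.exp_add]
  have h3 : x - x ^ 2 = -(x ^ 2) + x := by ring
  rw [h3]
theorem tendsto_poly_mul_gauss_atBot (p : Polynomial ℝ) :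
    Filter.Tendsto (fun x : ℝ => p.eval x * Real.exp (-(x ^ 2))) Filter.atBot (nhds 0) := by
  have h := tendsto_poly_mul_gauss_atTop (p.comp (-Polynomial.X))
  have h2 := h.comp Filter.tendsto_neg_atBot_atTop
  refine h2.congr fun x => ?_
  simp [Function.comp, Polynomial.eval_comp]
theorem integral_deriv_zero (F F' : ℝ → ℝ) (hF : ∀ x, HasDerivAt F (F' x) x)
    (hF' : Integrable F') (htop : Filter.Tendsto F Filter.atTop (nhds 0))
    (hbot : Filter.Tendsto F Filter.atBot (nhds 0)) : ∫ x : ℝ, F' x = 0 := by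
  have h1 : ∫ x in Set.Iic (0:ℝ), F' x = F 0 - 0 :=
    MeasureTheory.integral_Iic_of_hasDerivAt_of_tendsto' (fun x _ => hF x)
      hF'.integrableOn hbot
  have h2 : ∫ x in Set.Ioi (0:ℝ), F' x = 0 - F 0 :=
    MeasureTheory.integral_Ioi_of_hasDerivAt_of_tendsto' (fun x _ => hF x)
      hF'.integrableOn htop
  rw [← intervalIntegral.integral_Iic_add_Ioi hF'.integrableOn hF'.integrableOn, h1, h2]
  ring

/-- The n-th derivative of the gaussian. -/
noncomputable def G (n : ℕ) : ℝ → ℝ := fun x => iteratedDeriv n (fun y => Real.exp (-(y ^ 2))) x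

theorem G_eq (n : ℕ) : G n = fun x => (-1 : ℝ) ^ n * ((PH n).eval x * Real.exp (-(x ^ 2))) :=
  funext fun x => gauss_iteratedDeriv n x

theorem hasDerivAt_G (n : ℕ) (x : ℝ) : HasDerivAt (G n) (G (n + 1) x) x := by
  rw [G_eq n, G_eq (n + 1)]
  have h1 : HasDerivAt (fun x : ℝ => Real.exp (-(x ^ 2))) (-(2 * x) * Real.exp (-(x ^ 2))) x := by
    have := ((hasDerivAt_pow 2 x).neg).exp
    simpa using this.congr_deriv (by simp only [Pi.neg_apply]; ring)
  have h2 := (((PH n).hasDerivAt x).mul h1).const_mul ((-1 : ℝ) ^ n)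
  refine h2.congr_deriv ?_
  show _ = (-1:ℝ)^(n+1) * ((PH (n+1)).eval x * Real.exp (-(x ^ 2)))
  simp only [PH, Polynomial.eval_sub, Polynomial.eval_mul, Polynomial.eval_ofNat,
    Polynomial.eval_X]
  ring

theorem poly_mul_G_eq (p : Polynomial ℝ) (n : ℕ) :
    (fun x : ℝ => p.eval x * G n x) =
      fun x : ℝ => (Polynomial.C ((-1:ℝ)^n) * (p * PH n)).eval x * Real.exp (-(x ^ 2)) := by
  rw [G_eq]
  funext x
  simp only [Polynomial.eval_mul, Polynomial.eval_C]
  ring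

theorem integrable_poly_mul_G (p : Polynomial ℝ) (n : ℕ) :
    Integrable fun x : ℝ => p.eval x * G n x := by
  rw [poly_mul_G_eq]
  exact integrable_poly_mul_gauss' _

theorem parts_step (p : Polynomial ℝ) (n : ℕ) :
    ∫ x : ℝ, p.eval x * G (n + 1) x = -∫ x : ℝ, (Polynomial.derivative p).eval x * G n x := by
  have hF : ∀ x, HasDerivAt (fun x : ℝ => p.eval x * G n x)
      ((Polynomial.derivative p).eval x * G n x + p.eval x * G (n + 1) x) x :=
    fun x => (p.hasDerivAt x).mul (hasDerivAt_G n x)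
  have hint1 := integrable_poly_mul_G (Polynomial.derivative p) n
  have hint2 := integrable_poly_mul_G p (n + 1)
  have hzero : ∫ x : ℝ, ((Polynomial.derivative p).eval x * G n x + p.eval x * G (n + 1) x) = 0 := by
    refine integral_deriv_zero _ _ hF (hint1.add hint2) ?_ ?_
    · rw [poly_mul_G_eq]; exact tendsto_poly_mul_gauss_atTop _
    · rw [poly_mul_G_eq]; exact tendsto_poly_mul_gauss_atBot _
  rw [MeasureTheory.integral_add hint1 hint2] at hzero
  linarith

theorem parts_iter (p : Polynomial ℝ) (n : ℕ) :
    ∫ x : ℝ, p.eval x * G n x =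
      (-1 : ℝ) ^ n * ∫ x : ℝ, ((Polynomial.derivative)^[n] p).eval x * Real.exp (-(x ^ 2)) := by
  induction n generalizing p with
  | zero => simp [G, iteratedDeriv_zero]
  | succ k ih =>
    rw [parts_step p k, ih (Polynomial.derivative p), ← Function.iterate_succ_apply, pow_succ]
    ring

theorem PH_ortho (j k : ℕ) :
    ∫ x : ℝ, (PH j).eval x * (PH k).eval x * Real.exp (-(x ^ 2)) =
      if j = k then (2 : ℝ) ^ j * j.factorial * Real.sqrt Real.pi else 0 := by
  have key : ∀ a b : ℕ, a ≤ b → ∫ x : ℝ, (PH a).eval x * (PH b).eval x * Real.exp (-(x ^ 2)) =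
      if a = b then (2 : ℝ) ^ a * a.factorial * Real.sqrt Real.pi else 0 := by
    intro a b hab
    have h1 : ∀ x : ℝ, (PH a).eval x * (PH b).eval x * Real.exp (-(x ^ 2)) =
        (-1:ℝ)^b * ((PH a).eval x * G b x) := by
      intro x
      rw [G_eq]
      have : ((-1:ℝ)^b) * ((-1:ℝ)^b) = 1 := by
        rw [← pow_add]; exact neg_one_pow_eq_one_iff_even (by norm_num) |>.2 ⟨b, by ring⟩
      calc (PH a).eval x * (PH b).eval x * Real.exp (-(x ^ 2))
          = (((-1:ℝ)^b) * ((-1:ℝ)^b)) * ((PH a).eval x * ((PH b).eval x * Real.exp (-(x ^ 2)))) := by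
            rw [this]; ring
        _ = (-1:ℝ)^b * ((PH a).eval x * ((-1:ℝ)^b * ((PH b).eval x * Real.exp (-(x ^ 2))))) := by ring
    simp_rw [h1]
    rw [MeasureTheory.integral_const_mul, parts_iter]
    rcases eq_or_lt_of_le hab with rfl | hlt
    · rw [PH_iterate_derivative_self]
      simp only [if_pos rfl]
      have : ((-1:ℝ)^a) * ((-1:ℝ)^a) = 1 := by
        rw [← pow_add]; exact neg_one_pow_eq_one_iff_even (by norm_num) |>.2 ⟨a, by ring⟩
      have hg : ∫ x : ℝ, ((((2:ℕ)^a * a.factorial : ℕ) : Polynomial ℝ)).eval x * Real.exp (-(x ^ 2))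
          = ((2:ℕ)^a * a.factorial : ℕ) * Real.sqrt Real.pi := by
        simp only [Polynomial.eval_natCast]
        rw [MeasureTheory.integral_const_mul]
        have := integral_gaussian 1
        simp only [neg_mul, one_mul, div_one] at this
        rw [this]
      rw [hg]
      rw [← mul_assoc, this]
      push_cast
      ring
    · rw [PH_iterate_derivative_zero hlt]
      simp only [Polynomial.eval_zero, zero_mul, MeasureTheory.integral_zero, mul_zero]
      rw [if_neg (Nat.ne_of_lt hlt)]
  rcases le_total j k with h | h
  · exact key j k h
  · have := key k j h
    simp_rw [show ∀ x : ℝ, (PH j).eval x * (PH k).eval x = (PH k).eval x * (PH j).eval x from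
      fun x => mul_comm _ _]
    rw [this]
    by_cases hjk : j = k
    · subst hjk; simp
    · rw [if_neg (fun hh => hjk hh.symm), if_neg hjk]
/-- Normalization constant. -/
noncomputable def cst (α : ℝ) (n : ℕ) : ℝ :=
  Real.sqrt (α / (2 ^ n * n.factorial * Real.sqrt Real.pi))

theorem genHermite_eq (α : ℝ) (n : ℕ) : genHermite α n =
    fun x => cst α n * (PH n).eval (α * x) * Real.exp (-(α ^ 2 * x ^ 2) / 2) := by
  funext x
  rw [genHermite, physHermite_eq, cst]

theorem genHermite_mul_eq (α : ℝ) (j k : ℕ) :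
    (fun x => genHermite α j x * genHermite α k x) =
      fun x => (cst α j * cst α k) *
        (((PH j) * (PH k)).eval (α * x) * Real.exp (-((α * x) ^ 2))) := by
  funext x
  rw [genHermite_eq, genHermite_eq]
  simp only [Polynomial.eval_mul]
  rw [show Real.exp (-((α * x) ^ 2)) =
    Real.exp (-(α ^ 2 * x ^ 2) / 2) * Real.exp (-(α ^ 2 * x ^ 2) / 2) by
      rw [← Real.exp_add]; congr 1; ring]
  ring

theorem genHermite_mul_integrable {α : ℝ} (hα : 0 < α) (j k : ℕ) :
    Integrable fun x => genHermite α j x * genHermite α k x := by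
  rw [genHermite_mul_eq]
  have hg : Integrable (fun y : ℝ => ((PH j) * (PH k)).eval y * Real.exp (-(y ^ 2))) :=
    integrable_poly_mul_gauss' _
  exact (hg.comp_mul_left' hα.ne').const_mul _

theorem genHermite_ortho {α : ℝ} (hα : 0 < α) (j k : ℕ) :
    ∫ x : ℝ, genHermite α j x * genHermite α k x = if j = k then 1 else 0 := by
  rw [genHermite_mul_eq]
  rw [MeasureTheory.integral_const_mul]
  have hsub := MeasureTheory.Measure.integral_comp_mul_left
    (fun y : ℝ => ((PH j) * (PH k)).eval y * Real.exp (-(y ^ 2))) α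
  rw [hsub]
  have hPH := PH_ortho j k
  have : ∫ y : ℝ, ((PH j) * (PH k)).eval y * Real.exp (-(y ^ 2)) =
      if j = k then (2 : ℝ) ^ j * j.factorial * Real.sqrt Real.pi else 0 := by
    rw [← hPH]; congr 1; funext y; simp [Polynomial.eval_mul]
  rw [this]
  by_cases hjk : j = k
  · subst hjk
    rw [if_pos rfl, if_pos rfl]
    have hD : (0:ℝ) < 2 ^ j * j.factorial * Real.sqrt Real.pi := by
      have : (0:ℝ) < Real.sqrt Real.pi := Real.sqrt_pos.2 Real.pi_pos
      positivity
    have hc : cst α j * cst α j = α / (2 ^ j * j.factorial * Real.sqrt Real.pi) := by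
      rw [cst]
      exact Real.mul_self_sqrt (by positivity)
    rw [hc, abs_of_pos (inv_pos.2 hα), smul_eq_mul]
    field_simp
  · rw [if_neg hjk, if_neg hjk]
    simp
theorem hasDerivAt_genHermite (α : ℝ) (n : ℕ) (x : ℝ) :
    HasDerivAt (genHermite α n)
      (cst α n * (α * (Polynomial.derivative (PH n)).eval (α * x)) *
          Real.exp (-(α ^ 2 * x ^ 2) / 2) - α ^ 2 * x * genHermite α n x) x := by
  rw [genHermite_eq]
  have h1 : HasDerivAt (fun x : ℝ => (PH n).eval (α * x))
      ((Polynomial.derivative (PH n)).eval (α * x) * (α * 1)) x :=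
    ((PH n).hasDerivAt (α * x)).comp x ((hasDerivAt_id x).const_mul α)
  have h2 := (((hasDerivAt_pow 2 x).const_mul (α ^ 2)).neg.div_const 2).exp
  have h3 := ((h1.const_mul (cst α n)).mul h2)
  refine h3.congr_deriv ?_
  show _ = _ - α ^ 2 * x * (cst α n * (PH n).eval (α * x) * Real.exp (-(α ^ 2 * x ^ 2) / 2))
  push_cast [Pi.neg_apply]
  ring

theorem cst_succ (α : ℝ) (hα : 0 < α) (m : ℕ) :
    cst α (m + 1) * (2 * ((m : ℝ) + 1)) = Real.sqrt (2 * ((m : ℝ) + 1)) * cst α m := by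
  have hπ : (0:ℝ) < Real.sqrt Real.pi := Real.sqrt_pos.2 Real.pi_pos
  have hm : (0:ℝ) < 2 * ((m:ℝ) + 1) := by positivity
  have L : cst α (m+1) * (2*((m:ℝ)+1)) =
      Real.sqrt ((α / (2^(m+1) * (m+1).factorial * Real.sqrt Real.pi)) * (2*((m:ℝ)+1))^2) := by
    rw [Real.sqrt_mul (by positivity), Real.sqrt_sq hm.le, cst]
  have R : Real.sqrt (2*((m:ℝ)+1)) * cst α m =
      Real.sqrt ((2*((m:ℝ)+1)) * (α / (2^m * m.factorial * Real.sqrt Real.pi))) := by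
    rw [Real.sqrt_mul hm.le, cst]
  rw [L, R]
  congr 1
  rw [Nat.factorial_succ]
  have hfac : ((m.factorial : ℝ)) ≠ 0 := Nat.cast_ne_zero.2 m.factorial_ne_zero
  push_cast
  field_simp
  ring

theorem Dx_genHermite {α : ℝ} (hα : 0 < α) (n : ℕ) (x : ℝ) :
    deriv (genHermite α n) x + α ^ 2 * x * genHermite α n x =
      α * Real.sqrt (2 * n) * genHermiteZ α ((n : ℤ) - 1) x := by
  rw [(hasDerivAt_genHermite α n x).deriv]
  cases n with
  | zero =>
    simp [PH, genHermiteZ]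
  | succ m =>
    rw [PH_derivative m]
    have hZ : genHermiteZ α (((m + 1 : ℕ) : ℤ) - 1) x = genHermite α m x := by
      have : ((m + 1 : ℕ) : ℤ) - 1 = (m : ℤ) := by push_cast; ring
      rw [this, genHermiteZ, if_pos (Int.natCast_nonneg m), Int.toNat_natCast]
    rw [hZ, genHermite_eq α (m+1), genHermite_eq α m]
    simp only [Polynomial.eval_mul, Polynomial.eval_natCast]
    have key := cst_succ α hα m
    push_cast
    push_cast at key
    linear_combination (α * Polynomial.eval (α * x) (PH m) * Real.exp (-(α ^ 2 * x ^ 2) / 2)) * key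
theorem integral_sq_expansion {α : ℝ} (hα : 0 < α) (s : Finset ℕ) (a : ℕ → ℝ) :
    ∫ x : ℝ, (∑ k ∈ s, a k * genHermite α k x) ^ 2 = ∑ k ∈ s, (a k) ^ 2 := by
  have hexp : ∀ x : ℝ, (∑ k ∈ s, a k * genHermite α k x) ^ 2 =
      ∑ j ∈ s, ∑ k ∈ s, (a j * a k) * (genHermite α j x * genHermite α k x) := by
    intro x
    rw [sq, Finset.sum_mul_sum]
    exact Finset.sum_congr rfl fun j _ => Finset.sum_congr rfl fun k _ => by ring
  simp_rw [hexp]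
  rw [MeasureTheory.integral_finset_sum s (fun j hj =>
    MeasureTheory.integrable_finset_sum s (fun k hk =>
      ((genHermite_mul_integrable hα j k).const_mul _)))]
  have : ∀ j ∈ s, (∫ x : ℝ, ∑ k ∈ s, (a j * a k) * (genHermite α j x * genHermite α k x))
      = (a j) ^ 2 := by
    intro j hj
    rw [MeasureTheory.integral_finset_sum s (fun k hk =>
      ((genHermite_mul_integrable hα j k).const_mul _))]
    have h2 : ∀ k ∈ s, (∫ x : ℝ, (a j * a k) * (genHermite α j x * genHermite α k x)) =
        if j = k then a j * a k else 0 := by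
      intro k hk
      rw [MeasureTheory.integral_const_mul, genHermite_ortho hα]
      by_cases h : j = k <;> simp [h]
    rw [Finset.sum_congr rfl h2, Finset.sum_ite_eq s j (fun k => a j * a k), if_pos hj, sq]
  rw [Finset.sum_congr rfl this]

set_option maxHeartbeats 1000000 in
/-- the remainder operator `R_m = I − Q_m`, acting on
`φ = Σ_{k=0}^N c_k H_k^α ∈ R_N` by `R_m φ = Σ_{k=0}^N (1 − q̂_k) c_k H_k^α`, satisfies
`‖D_x R_m φ‖² ≤ C α² m² ‖φ‖²` for an absolute constant `C > 0`. -/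
theorem DxR_le : ∃ C : ℝ, 0 < C ∧ ∀ (α : ℝ), 0 < α → ∀ (m N : ℕ), 0 < m → m < N →
    ∀ q : ℕ → ℝ, (∀ k ≤ N, k ≤ m → q k = 0) →
    (∀ k ≤ N, m < k → 1 - (m : ℝ) / (k : ℝ) ≤ q k ∧ q k < 1) →
    ∀ (c : ℕ → ℝ) (φ Rφ : ℝ → ℝ),
    (φ = fun x => ∑ k ∈ Finset.range (N + 1), c k * genHermite α k x) →
    (Rφ = fun x => ∑ k ∈ Finset.range (N + 1), (1 - q k) * c k * genHermite α k x) →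
    ∫ x : ℝ, (Dx α Rφ x) ^ 2 ≤ C * α ^ 2 * (m : ℝ) ^ 2 * ∫ x : ℝ, (φ x) ^ 2 := by
  refine ⟨2, two_pos, ?_⟩
  intro α hα m N hm hmN q hq0 hq1 c φ Rφ hφ hRφ
  set d : ℕ → ℝ := fun k => (1 - q k) * c k with hd
  -- pointwise identity for Dx Rφ
  have key : ∀ x : ℝ, Dx α Rφ x =
      ∑ j ∈ Finset.range N, (d (j + 1) * (α * Real.sqrt (2 * ((j : ℝ) + 1)))) *
        genHermite α j x := by
    intro x
    have hder : HasDerivAt Rφ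
        (∑ k ∈ Finset.range (N + 1), d k *
          (cst α k * (α * (Polynomial.derivative (PH k)).eval (α * x)) *
            Real.exp (-(α ^ 2 * x ^ 2) / 2) - α ^ 2 * x * genHermite α k x)) x := by
      rw [hRφ]
      exact HasDerivAt.fun_sum fun k _ => (hasDerivAt_genHermite α k x).const_mul (d k)
    have hDx : Dx α Rφ x = ∑ k ∈ Finset.range (N + 1),
        d k * (α * Real.sqrt (2 * (k : ℝ)) * genHermiteZ α ((k : ℤ) - 1) x) := by
      rw [Dx, hder.deriv, hRφ]
      rw [Finset.mul_sum, ← Finset.sum_add_distrib]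
      refine Finset.sum_congr rfl fun k _ => ?_
      have := Dx_genHermite hα k x
      rw [(hasDerivAt_genHermite α k x).deriv] at this
      calc d k * (cst α k * (α * (Polynomial.derivative (PH k)).eval (α * x)) *
              Real.exp (-(α ^ 2 * x ^ 2) / 2) - α ^ 2 * x * genHermite α k x) +
            α ^ 2 * x * ((1 - q k) * c k * genHermite α k x)
          = d k * ((cst α k * (α * (Polynomial.derivative (PH k)).eval (α * x)) *
              Real.exp (-(α ^ 2 * x ^ 2) / 2) - α ^ 2 * x * genHermite α k x) +
              α ^ 2 * x * genHermite α k x) := by rw [hd]; ring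
        _ = d k * (α * Real.sqrt (2 * (k : ℝ)) * genHermiteZ α ((k : ℤ) - 1) x) := by
              rw [this]
    rw [hDx, Finset.sum_range_succ']
    have h0 : d 0 * (α * Real.sqrt (2 * ((0 : ℕ) : ℝ)) * genHermiteZ α (((0 : ℕ) : ℤ) - 1) x)
        = 0 := by
      norm_num
    rw [h0, add_zero]
    refine Finset.sum_congr rfl fun j _ => ?_
    have hZ : genHermiteZ α (((j + 1 : ℕ) : ℤ) - 1) x = genHermite α j x := by
      have h1 : ((j + 1 : ℕ) : ℤ) - 1 = (j : ℤ) := by push_cast; ring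
      rw [h1, genHermiteZ, if_pos (Int.natCast_nonneg j), Int.toNat_natCast]
    rw [hZ]
    push_cast
    ring
  -- compute both integrals
  have hint1 : ∫ x : ℝ, (Dx α Rφ x) ^ 2 =
      ∑ j ∈ Finset.range N, (d (j + 1) * (α * Real.sqrt (2 * ((j : ℝ) + 1)))) ^ 2 := by
    rw [show (fun x : ℝ => (Dx α Rφ x) ^ 2) = fun x : ℝ =>
        (∑ j ∈ Finset.range N, (d (j + 1) * (α * Real.sqrt (2 * ((j : ℝ) + 1)))) *
          genHermite α j x) ^ 2 from funext fun x => by rw [key x]]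
    exact integral_sq_expansion hα _ _
  have hint2 : ∫ x : ℝ, (φ x) ^ 2 = ∑ k ∈ Finset.range (N + 1), (c k) ^ 2 := by
    rw [hφ]
    exact integral_sq_expansion hα _ _
  rw [hint1, hint2]
  -- termwise bound
  have hterm : ∀ j ∈ Finset.range N,
      (d (j + 1) * (α * Real.sqrt (2 * ((j : ℝ) + 1)))) ^ 2
        ≤ 2 * α ^ 2 * (m : ℝ) ^ 2 * (c (j + 1)) ^ 2 := by
    intro j hj
    rw [Finset.mem_range] at hj
    set k := j + 1 with hk
    have hkN : k ≤ N := hj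
    have hk1 : (1 : ℝ) ≤ (k : ℝ) := by exact_mod_cast Nat.one_le_iff_ne_zero.2 (by omega)
    have hsq : Real.sqrt (2 * ((j : ℝ) + 1)) ^ 2 = 2 * ((j : ℝ) + 1) := by
      rw [Real.sq_sqrt (by positivity)]
    have hexpand : (d k * (α * Real.sqrt (2 * ((j : ℝ) + 1)))) ^ 2
        = (1 - q k) ^ 2 * (c k) ^ 2 * α ^ 2 * (2 * ((j : ℝ) + 1)) := by
      rw [hd]
      rw [mul_pow, mul_pow, mul_pow, hsq]
      ring
    rw [hexpand]
    have hkj : ((j : ℝ) + 1) = (k : ℝ) := by push_cast [hk]; ring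
    rw [hkj]
    rcases le_or_gt k m with hkm | hmk
    · -- small k : q k = 0
      rw [hq0 k hkN hkm]
      have hkm' : (k : ℝ) ≤ (m : ℝ) := by exact_mod_cast hkm
      have hm1 : (1 : ℝ) ≤ (m : ℝ) := by exact_mod_cast hm
      have hA : (0:ℝ) ≤ (c k) ^ 2 * α ^ 2 := by positivity
      have hm2 : (m : ℝ) ≤ (m : ℝ) ^ 2 := by nlinarith
      nlinarith [mul_le_mul_of_nonneg_left hkm' hA, mul_le_mul_of_nonneg_left hm2 hA]
    · -- large k
      obtain ⟨h1, h2⟩ := hq1 k hkN hmk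
      have hkpos : (0 : ℝ) < (k : ℝ) := lt_of_lt_of_le one_pos hk1
      have hpos : 0 < 1 - q k := by linarith
      have hle : 1 - q k ≤ (m : ℝ) / (k : ℝ) := by linarith
      have hsq2 : (1 - q k) ^ 2 ≤ ((m : ℝ) / (k : ℝ)) ^ 2 :=
        pow_le_pow_left₀ hpos.le hle 2
      have hdiv : ((m : ℝ) / (k : ℝ)) ^ 2 * (2 * (k : ℝ)) ≤ 2 * (m : ℝ) ^ 2 := by
        rw [div_pow]
        rw [div_mul_eq_mul_div, div_le_iff₀ (by positivity)]
        have : (k : ℝ) ≤ (k : ℝ) ^ 2 := by nlinarith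
        nlinarith [sq_nonneg (m : ℝ)]
      calc (1 - q k) ^ 2 * (c k) ^ 2 * α ^ 2 * (2 * (k : ℝ))
          ≤ ((m : ℝ) / (k : ℝ)) ^ 2 * (c k) ^ 2 * α ^ 2 * (2 * (k : ℝ)) := by
            have h2k : (0:ℝ) ≤ 2 * (k : ℝ) := by positivity
            nlinarith [mul_nonneg (mul_nonneg (sq_nonneg (c k)) (sq_nonneg α)) h2k]
        _ = (((m : ℝ) / (k : ℝ)) ^ 2 * (2 * (k : ℝ))) * ((c k) ^ 2 * α ^ 2) := by ring
        _ ≤ (2 * (m : ℝ) ^ 2) * ((c k) ^ 2 * α ^ 2) := by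
            exact mul_le_mul_of_nonneg_right hdiv (by positivity)
        _ = 2 * α ^ 2 * (m : ℝ) ^ 2 * (c k) ^ 2 := by ring
  calc ∑ j ∈ Finset.range N, (d (j + 1) * (α * Real.sqrt (2 * ((j : ℝ) + 1)))) ^ 2
      ≤ ∑ j ∈ Finset.range N, 2 * α ^ 2 * (m : ℝ) ^ 2 * (c (j + 1)) ^ 2 :=
        Finset.sum_le_sum hterm
    _ = 2 * α ^ 2 * (m : ℝ) ^ 2 * ∑ j ∈ Finset.range N, (c (j + 1)) ^ 2 := by
        rw [Finset.mul_sum]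
    _ ≤ 2 * α ^ 2 * (m : ℝ) ^ 2 * ∑ k ∈ Finset.range (N + 1), (c k) ^ 2 := by
        refine mul_le_mul_of_nonneg_left ?_ (by positivity)
        rw [Finset.sum_range_succ']
        nlinarith [sq_nonneg (c 0)]
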